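/- arXiv:1610.09822 — 2 statements merged into one kernel-verified Lean document; each statement's English description precedes it below -/
import Mathlib

section
/- Every nonzero object E of C admits a Harder–Narasimhan filtration, i.e. a strictly increasing chain of subobjects 0 = F₀ < F₁ < ⋯ < Fₙ = E such that each successive quotient Fᵢ/Fᵢ₋₁ (for 1 ≤ i ≤ n) is semi-stable and the slopes satisfy μ(F₁/F₀) > μ(F₂/F₁) > ⋯ > μ(Fₙ/Fₙ₋₁). -/
open CategoryTheory CategoryTheory.Limits

universe v u v' u'

/-- A Harder–Narasimhan setting: an exact additive functor `η : C ⥤ A` between abelian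
categories, a degree function `d` on objects of `C` additive on short exact sequences,
and a rank function `r` on objects of `A` additive on short exact sequences, satisfying
axioms (HN1), (HN2), (HN3). -/
structure HNSetting (C : Type u) (A : Type u') [Category.{v} C] [Category.{v'} A]
    [Abelian C] [Abelian A] where
  /-- the fibre functor -/
  η : C ⥤ A
  η_additive : η.Additive
  /-- `η` is exact: it preserves finite limits and finite colimits -/
  η_preservesFiniteLimits : PreservesFiniteLimits η
  η_preservesFiniteColimits : PreservesFiniteColimits η
  /-- the degree function -/
  d : C → ℕ
  /-- the rank function -/
  r : A → ℕ
  d_additive : ∀ S : ShortComplex C, S.ShortExact → d S.X₂ = d S.X₁ + d S.X₃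
  r_additive : ∀ S : ShortComplex A, S.ShortExact → r S.X₂ = r S.X₁ + r S.X₃
  /-- (HN1) -/
  hn1 : ∀ E : C, r (η.obj E) = 0 ↔ IsZero E
  /-- (HN2) -/
  hn2 : ∀ {E E' : C} (f : E ⟶ E'), IsIso (η.map f) →
    d E ≤ d E' ∧ (d E = d E' ↔ IsIso f)
  /-- (HN3): `η` maps the subobjects of `E` injectively to those of `η(E)`. -/
  hn3 : ∀ {E : C} (F₁ F₂ : Subobject E),
    (∃ e : η.obj ((F₁ : C)) ≅ η.obj ((F₂ : C)),
      e.hom ≫ η.map F₂.arrow = η.map F₁.arrow) → F₁ = F₂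

namespace HNSetting

variable {C : Type u} {A : Type u'} [Category.{v} C] [Category.{v'} A]
  [Abelian C] [Abelian A]

/-- The slope `μ(E) = d(E) / r(η(E))` of an object of `C`. -/
def slope (h : HNSetting C A) (E : C) : ℚ :=
  (h.d E : ℚ) / (h.r (h.η.obj E) : ℚ)

/-- An object `E` is semi-stable if it is nonzero and `μ(E') ≤ μ(E)` for every nonzero
subobject `E'` of `E`. -/
def Semistable (h : HNSetting C A) (E : C) : Prop :=
  ¬ IsZero E ∧ ∀ F : Subobject E, ¬ IsZero ((F : C)) → h.slope ((F : C)) ≤ h.slope E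

/-- A nonzero subobject `F` of `X` is costable in `X` if `μ(F') > μ(F)` for every
subobject `F'` of `X` strictly containing `F`. -/
def Costable (h : HNSetting C A) {X : C} (F : Subobject X) : Prop :=
  ¬ IsZero ((F : C)) ∧ ∀ F' : Subobject X, F < F' → h.slope ((F : C)) < h.slope ((F' : C))

end HNSetting

/-- The quotient `Y/X` of two nested subobjects `X ≤ Y` of an object `E`. -/
noncomputable def subQuotient {C : Type u} [Category.{v} C] [Abelian C] {E : C}
    (X Y : Subobject E) (hXY : X ≤ Y) : C :=
  cokernel (Subobject.ofLE X Y hXY)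

/-! ### Auxiliary material for the existence proof -/

open ZeroObject

lemma subQuotient_congr {C : Type u} [Category.{v} C] [Abelian C] {E : C}
    {X₁ Y₁ X₂ Y₂ : Subobject E} (e1 : X₁ = X₂) (e2 : Y₁ = Y₂)
    (p1 : X₁ ≤ Y₁) (p2 : X₂ ≤ Y₂) :
    subQuotient X₁ Y₁ p1 = subQuotient X₂ Y₂ p2 := by
  subst e1; subst e2; rfl

namespace HNSetting

variable {C : Type u} {A : Type u'} [Category.{v} C] [Category.{v'} A]
  [Abelian C] [Abelian A]

/-- The rank of an object of `C`. -/
def rk (h : HNSetting C A) (X : C) : ℕ := h.r (h.η.obj X)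

lemma rk_additive (h : HNSetting C A) {S : ShortComplex C} (hS : S.ShortExact) :
    h.rk S.X₂ = h.rk S.X₁ + h.rk S.X₃ := by
  haveI := h.η_additive
  haveI := h.η_preservesFiniteLimits
  haveI := h.η_preservesFiniteColimits
  exact h.r_additive _ (hS.map_of_exact h.η)

lemma rk_eq_zero_iff (h : HNSetting C A) (X : C) : h.rk X = 0 ↔ IsZero X := h.hn1 X

lemma slope_eq (h : HNSetting C A) (X : C) : h.slope X = (h.d X : ℚ) / (h.rk X : ℚ) := rfl

section Additive

variable (f : C → ℕ)
  (hf : ∀ S : ShortComplex C, S.ShortExact → f S.X₂ = f S.X₁ + f S.X₃)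

include hf

lemma additive_zero : f (0 : C) = 0 := by
  have hz : IsZero (0 : C) := isZero_zero C
  have := hf (ShortComplex.mk (𝟙 (0 : C)) (𝟙 (0 : C)) (hz.eq_of_src _ _))
    { exact := ShortComplex.exact_of_isZero_X₂ _ hz }
  simpa using this.symm

lemma additive_iso {X Y : C} (e : X ≅ Y) : f X = f Y := by
  have hz : IsZero (0 : C) := isZero_zero C
  haveI : Epi (0 : Y ⟶ (0 : C)) := ⟨fun _ _ _ => hz.eq_of_src _ _⟩
  have hex : (ShortComplex.mk e.hom (0 : Y ⟶ (0 : C)) comp_zero).Exact :=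
    (ShortComplex.exact_iff_epi _ rfl).2 inferInstance
  have h1 := hf (ShortComplex.mk e.hom (0 : Y ⟶ (0 : C)) comp_zero) { exact := hex }
  have h2 := additive_zero f hf
  simp only [ShortComplex.mk] at h1
  omega

end Additive

variable (h : HNSetting C A)

/-- The degree of a subobject. -/
noncomputable def dg {E : C} (X : Subobject E) : ℕ := h.d ((X : C))

/-- The rank of a subobject. -/
noncomputable def rks {E : C} (X : Subobject E) : ℕ := h.rk ((X : C))

lemma shortExact_ofLE {E : C} (X Y : Subobject E) (hXY : X ≤ Y) :
    (ShortComplex.mk (Subobject.ofLE X Y hXY) (cokernel.π _)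
      (cokernel.condition _)).ShortExact :=
  { exact := ShortComplex.exact_of_f_is_kernel _
      (Abelian.monoIsKernelOfCokernel
        (CokernelCofork.ofπ (cokernel.π (Subobject.ofLE X Y hXY)) (cokernel.condition _))
        (cokernelIsCokernel (Subobject.ofLE X Y hXY))) }

lemma dg_eq {E : C} {X Y : Subobject E} (hXY : X ≤ Y) :
    h.dg Y = h.dg X + h.d (subQuotient X Y hXY) :=
  h.d_additive _ (shortExact_ofLE X Y hXY)

lemma rks_eq {E : C} {X Y : Subobject E} (hXY : X ≤ Y) :
    h.rks Y = h.rks X + h.rk (subQuotient X Y hXY) :=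
  h.rk_additive (shortExact_ofLE X Y hXY)

lemma dg_le {E : C} {X Y : Subobject E} (hXY : X ≤ Y) : h.dg X ≤ h.dg Y := by
  have := h.dg_eq hXY; omega

lemma rks_le {E : C} {X Y : Subobject E} (hXY : X ≤ Y) : h.rks X ≤ h.rks Y := by
  have := h.rks_eq hXY; omega

lemma rks_lt {E : C} {X Y : Subobject E} (hXY : X < Y) : h.rks X < h.rks Y := by
  have heq := h.rks_eq hXY.le
  suffices hq : h.rk (subQuotient X Y hXY.le) ≠ 0 by omega
  intro h0
  have hz : IsZero (subQuotient X Y hXY.le) := (h.rk_eq_zero_iff _).1 h0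
  have hπ : cokernel.π (Subobject.ofLE X Y hXY.le) = 0 := hz.eq_of_tgt _ _
  haveI : Epi (Subobject.ofLE X Y hXY.le) :=
    CategoryTheory.Abelian.epi_of_cokernel_π_eq_zero _ hπ
  haveI : IsIso (Subobject.ofLE X Y hXY.le) := isIso_of_mono_of_epi _
  refine absurd (le_antisymm hXY.le (Subobject.le_of_comm
    (inv (Subobject.ofLE X Y hXY.le)) ?_)) hXY.ne
  rw [← Subobject.ofLE_arrow hXY.le, IsIso.inv_hom_id_assoc]

include h in
lemma subQuotient_nonzero {E : C} {X Y : Subobject E} (hXY : X < Y) :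
    ¬ IsZero (subQuotient X Y hXY.le) := by
  intro hz
  have h1 := h.rks_lt hXY
  have h2 := h.rks_eq hXY.le
  rw [(h.rk_eq_zero_iff _).2 hz] at h2
  omega

/-- The slope of the interval `(X, Y]`. -/
noncomputable def mu {E : C} (X Y : Subobject E) : ℚ :=
  ((h.dg Y : ℚ) - (h.dg X : ℚ)) / ((h.rks Y : ℚ) - (h.rks X : ℚ))

lemma slope_subQuotient {E : C} {X Y : Subobject E} (hXY : X < Y) :
    h.slope (subQuotient X Y hXY.le) = h.mu X Y := by
  have hd := h.dg_eq hXY.le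
  have hr := h.rks_eq hXY.le
  rw [h.slope_eq, HNSetting.mu, hd, hr]
  push_cast
  rw [add_sub_cancel_left, add_sub_cancel_left]

lemma slope_sq_eq {E : C} {X₁ Y₁ X₂ Y₂ : Subobject E} (p1 : X₁ ≤ Y₁) (p2 : X₂ ≤ Y₂)
    (e1 : X₁ = X₂) (e2 : Y₁ = Y₂) :
    h.slope (subQuotient X₁ Y₁ p1) = h.slope (subQuotient X₂ Y₂ p2) := by
  subst e1; subst e2; rfl

lemma slope_sq_congr {E : C} {X₁ Y₁ X₂ Y₂ : Subobject E} (p1 : X₁ ≤ Y₁) (hXY : X₂ < Y₂)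
    (e1 : X₁ = X₂) (e2 : Y₁ = Y₂) :
    h.slope (subQuotient X₁ Y₁ p1) = h.mu X₂ Y₂ := by
  subst e1; subst e2; exact h.slope_subQuotient hXY

lemma semistable_sq_congr {E : C} {X₁ Y₁ X₂ Y₂ : Subobject E} (e1 : X₁ = X₂) (e2 : Y₁ = Y₂)
    (p1 : X₁ ≤ Y₁) (p2 : X₂ ≤ Y₂) (hs : h.Semistable (subQuotient X₂ Y₂ p2)) :
    h.Semistable (subQuotient X₁ Y₁ p1) := by
  subst e1; subst e2; exact hs

/-- The key correspondence: a subobject `G` of `Y/X` gives an intermediate subobject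
`X ≤ W ≤ Y` whose degree and rank are those of `X` plus those of `G`. -/
lemma exists_interval {E : C} (X Y : Subobject E) (hXY : X ≤ Y)
    (G : Subobject (subQuotient X Y hXY)) :
    ∃ W : Subobject E, X ≤ W ∧ W ≤ Y ∧
      h.dg W = h.dg X + h.d ((G : C)) ∧ h.rks W = h.rks X + h.rk ((G : C)) := by
  set f : ((X : C)) ⟶ ((Y : C)) := Subobject.ofLE X Y hXY with hf
  set π : ((Y : C)) ⟶ subQuotient X Y hXY := cokernel.π f with hπ
  -- the pullback of G.arrow along π
  set P := pullback G.arrow π with hP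
  have hcond : (0 : ((X : C)) ⟶ ((G : C))) ≫ G.arrow = f ≫ π := by
    rw [zero_comp, hπ]; exact (cokernel.condition f).symm
  set ℓ : ((X : C)) ⟶ P := pullback.lift 0 f hcond with hℓ
  have hℓfst : ℓ ≫ pullback.fst G.arrow π = 0 := by exact pullback.lift_fst _ _ _
  have hℓsnd : ℓ ≫ pullback.snd G.arrow π = f := by exact pullback.lift_snd _ _ _
  haveI : Mono ℓ := by
    have : Mono (ℓ ≫ pullback.snd G.arrow π) := by rw [hℓsnd]; infer_instance
    exact mono_of_mono ℓ (pullback.snd G.arrow π)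
  -- ℓ is a kernel of pullback.fst
  have hlim : IsLimit (KernelFork.ofι ℓ hℓfst) := by
    refine KernelFork.IsLimit.ofι ℓ hℓfst
      (fun {T} t ht => Abelian.monoLift f (t ≫ pullback.snd G.arrow π) ?_)
      (fun {T} t ht => ?_) (fun {T} t ht m hm => ?_)
    · show (t ≫ pullback.snd G.arrow π) ≫ π = 0
      rw [Category.assoc, ← pullback.condition, ← Category.assoc, ht, zero_comp]
    · apply pullback.hom_ext
      · rw [Category.assoc, hℓfst, comp_zero, ht]
      · rw [Category.assoc, hℓsnd, Abelian.monoLift_comp]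
    · rw [← cancel_mono ℓ, hm]
      apply pullback.hom_ext
      · rw [Category.assoc, hℓfst, comp_zero, ht]
      · rw [Category.assoc, hℓsnd, Abelian.monoLift_comp]
  haveI : Epi π := coequalizer.π_epi (f := f) (g := 0)
  have hSE : (ShortComplex.mk ℓ (pullback.fst G.arrow π) hℓfst).ShortExact :=
    { exact := ShortComplex.exact_of_f_is_kernel _ hlim }
  -- the intermediate subobject
  haveI : Mono (pullback.snd G.arrow π ≫ Y.arrow) := mono_comp _ _
  refine ⟨Subobject.mk (pullback.snd G.arrow π ≫ Y.arrow), ?_, ?_, ?_, ?_⟩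
  · exact Subobject.le_mk_of_comm ℓ
      (by rw [← Category.assoc, hℓsnd, hf, Subobject.ofLE_arrow])
  · exact Subobject.mk_le_of_comm (pullback.snd G.arrow π) rfl
  · have e := Subobject.underlyingIso (pullback.snd G.arrow π ≫ Y.arrow)
    have h1 : h.d ((Subobject.mk (pullback.snd G.arrow π ≫ Y.arrow) : C)) = h.d P :=
      additive_iso h.d h.d_additive e
    have h2 := h.d_additive _ hSE
    simp only [ShortComplex.mk] at h2
    rw [HNSetting.dg, h1, HNSetting.dg]
    exact h2
  · have e := Subobject.underlyingIso (pullback.snd G.arrow π ≫ Y.arrow)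
    have h1 : h.rk ((Subobject.mk (pullback.snd G.arrow π ≫ Y.arrow) : C)) = h.rk P :=
      additive_iso h.rk (fun _ hS => h.rk_additive hS) e
    have h2 := h.rk_additive hSE
    simp only [ShortComplex.mk] at h2
    rw [HNSetting.rks, h1, HNSetting.rks]
    exact h2

/-- Semi-stability of the quotient `Y/X` from maximality of `μ(X, ·)` at `Y`. -/
lemma semistable_subQuotient {E : C} {X Y : Subobject E} (hXY : X < Y)
    (hmax : ∀ W : Subobject E, X < W → W ≤ Y → h.mu X W ≤ h.mu X Y) :
    h.Semistable (subQuotient X Y hXY.le) := by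
  refine ⟨h.subQuotient_nonzero hXY, fun G hG => ?_⟩
  obtain ⟨W, hXW, hWY, hD, hR⟩ := h.exists_interval X Y hXY.le G
  have hGr : h.rk ((G : C)) ≠ 0 := fun h0 => hG ((h.rk_eq_zero_iff _).1 h0)
  have hXltW : X < W := by
    rcases lt_or_eq_of_le hXW with hlt | heq
    · exact hlt
    · exfalso; apply hGr; rw [← heq] at hR; omega
  have hslope : h.slope ((G : C)) = h.mu X W := by
    rw [h.slope_eq, HNSetting.mu, hD, hR]
    push_cast
    rw [add_sub_cancel_left, add_sub_cancel_left]
  rw [hslope, h.slope_subQuotient hXY]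
  exact hmax W hXltW hWY

/-- Mediant inequality. -/
lemma mediant_aux {a1 b1 a2 b2 : ℚ} (hb1 : 0 < b1) (hb2 : 0 < b2)
    (hle : a1 / b1 ≤ a2 / b2) : a1 / b1 ≤ (a1 + a2) / (b1 + b2) := by
  rw [div_le_div_iff₀ hb1 hb2] at hle
  rw [div_le_div_iff₀ hb1 (by linarith)]
  nlinarith

lemma rks_sub_pos {E : C} {X Y : Subobject E} (hXY : X < Y) :
    (0 : ℚ) < (h.rks Y : ℚ) - (h.rks X : ℚ) := by
  have := h.rks_lt hXY
  have h1 : (h.rks X : ℚ) < (h.rks Y : ℚ) := by exact_mod_cast this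
  linarith

lemma mu_glue {E : C} {X Y Z : Subobject E} (h1 : X < Y) (h2 : Y < Z)
    (hle : h.mu X Y ≤ h.mu Y Z) : h.mu X Y ≤ h.mu X Z := by
  have b1 := h.rks_sub_pos h1
  have b2 := h.rks_sub_pos h2
  have hXZ : h.mu X Z = (((h.dg Y : ℚ) - (h.dg X : ℚ)) + ((h.dg Z : ℚ) - (h.dg Y : ℚ))) /
      ((((h.rks Y : ℚ) - (h.rks X : ℚ))) + (((h.rks Z : ℚ) - (h.rks Y : ℚ)))) := by
    rw [HNSetting.mu]; ring_nf
  rw [hXZ]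
  exact mediant_aux b1 b2 hle

/-- Existence of a lexicographically maximal destabilizing subobject above `X`. -/
lemma exists_lexmax {E : C} (X : Subobject E) (hX : X < ⊤) :
    ∃ F : Subobject E, X < F ∧ (∀ W : Subobject E, X < W → h.mu X W ≤ h.mu X F) ∧
      (∀ W : Subobject E, X < W → h.mu X W = h.mu X F → h.rks W ≤ h.rks F) := by
  classical
  set key : Subobject E → Lex (ℚ × ℕ) := fun W => toLex (h.mu X W, h.rks W) with hkey
  have hsub : key '' {W : Subobject E | X < W} ⊆
      (fun p : ℕ × ℕ => toLex ((((p.1 : ℚ) - (h.dg X : ℚ)) / ((p.2 : ℚ) - (h.rks X : ℚ))), p.2)) ''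
        (Set.Iic (h.dg (⊤ : Subobject E)) ×ˢ Set.Iic (h.rks (⊤ : Subobject E))) := by
    rintro _ ⟨W, hW, rfl⟩
    exact ⟨(h.dg W, h.rks W), ⟨h.dg_le le_top, h.rks_le le_top⟩, rfl⟩
  have hfin : (key '' {W : Subobject E | X < W}).Finite :=
    Set.Finite.subset (Set.Finite.image _
      ((Set.finite_Iic _).prod (Set.finite_Iic _))) hsub
  obtain ⟨F, hF, hFmax⟩ := Set.Finite.exists_maximalFor' key _ hfin ⟨⊤, hX⟩
  have hle : ∀ W : Subobject E, X < W → key W ≤ key F := by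
    intro W hW
    by_contra hcon
    have hlt : key F < key W := lt_of_not_ge hcon
    exact absurd (hFmax hW hlt.le) (not_le_of_gt hlt)
  refine ⟨F, hF, fun W hW => ?_, fun W hW heq => ?_⟩
  · rcases Prod.Lex.le_iff.1 (hle W hW) with hlt | ⟨heq, _⟩
    · exact le_of_lt hlt
    · exact le_of_eq heq
  · rcases Prod.Lex.le_iff.1 (hle W hW) with hlt | ⟨_, hle2⟩
    · exfalso; exact (ne_of_lt hlt) heq
    · exact hle2

end HNSetting

/-- The main induction for the existence of Harder–Narasimhan filtrations. -/
private lemma HNSetting.main_induction {C : Type u} {A : Type u'} [Category.{v} C]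
    [Category.{v'} A] [Abelian C] [Abelian A] (h : HNSetting C A) (E : C) :
    ∀ (k : ℕ) (X : Subobject E), X < ⊤ → h.rks (⊤ : Subobject E) ≤ h.rks X + k →
    ∃ (m : ℕ) (G : Fin (m + 2) → Subobject E) (hmono : StrictMono G),
      G 0 = X ∧ G (Fin.last (m + 1)) = ⊤ ∧
      (∀ i : Fin (m + 1), h.Semistable
        (subQuotient (G i.castSucc) (G i.succ) (hmono (Fin.castSucc_lt_succ (i := i))).le)) ∧
      StrictAnti (fun i : Fin (m + 1) =>
        h.slope (subQuotient (G i.castSucc) (G i.succ)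
          (hmono (Fin.castSucc_lt_succ (i := i))).le)) ∧
      (∀ W : Subobject E, X < W → h.mu X W ≤ h.mu X (G 1)) ∧
      (∀ W : Subobject E, X < W → h.mu X W = h.mu X (G 1) → h.rks W ≤ h.rks (G 1)) := by
  intro k
  induction k with
  | zero =>
    intro X hX hk
    exact absurd hk (by have := h.rks_lt hX; omega)
  | succ k ih =>
    intro X hX hk
    obtain ⟨F₁, hXF₁, hmax, hmaxR⟩ := h.exists_lexmax X hX
    by_cases hF₁top : F₁ = ⊤
    · -- base: one-step filtration X < F₁ = ⊤
      have hmono2 : StrictMono (Fin.cons X (fun _ => F₁) : Fin 2 → Subobject E) := by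
        rw [Fin.strictMono_iff_lt_succ]
        intro i
        induction i using Fin.cases with
        | zero =>
          simp only [Fin.castSucc_zero, Fin.cons_zero, Fin.cons_succ]
          exact hXF₁
        | succ j => exact j.elim0
      have h1e : (1 : Fin 2) = (0 : Fin 1).succ := by decide
      have hc1 : (Fin.cons X (fun _ => F₁) : Fin 2 → Subobject E) 1 = F₁ := by
        rw [h1e, Fin.cons_succ]
      refine ⟨0, Fin.cons X (fun _ => F₁), hmono2, Fin.cons_zero _ _, ?_, ?_, ?_, ?_, ?_⟩
      · rw [show Fin.last 1 = (0 : Fin 1).succ from (by decide), Fin.cons_succ]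
        exact hF₁top
      · intro i
        have hi : i = 0 := Fin.eq_zero i
        subst hi
        exact h.semistable_sq_congr (by simp) (by simp) _ hXF₁.le
          (h.semistable_subQuotient hXF₁ (fun W hW _ => hmax W hW))
      · intro a b hab
        rw [Fin.eq_zero a, Fin.eq_zero b] at hab
        exact absurd hab (lt_irrefl _)
      · intro W hW
        rw [hc1]
        exact hmax W hW
      · intro W hW heq
        rw [hc1] at heq ⊢
        exact hmaxR W hW heq
    · have hF₁lt : F₁ < ⊤ := lt_of_le_of_ne le_top hF₁top
      have hk' : h.rks (⊤ : Subobject E) ≤ h.rks F₁ + k := by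
        have := h.rks_lt hXF₁; omega
      obtain ⟨m, G, hmono, hG0, hGlast, hss, hanti, -, -⟩ := ih F₁ hF₁lt hk'
      set G' : Fin (m + 3) → Subobject E := Fin.cons X G with hG'def
      have hG'0 : G' 0 = X := by rw [hG'def]; exact Fin.cons_zero _ _
      have hG'succ : ∀ j : Fin (m + 2), G' j.succ = G j := by
        intro j; rw [hG'def]; exact Fin.cons_succ (α := fun _ => Subobject E) X G j
      have h1e : (1 : Fin (m + 3)) = (0 : Fin (m + 2)).succ := by
        apply Fin.ext; simp
      have hG'1 : G' 1 = F₁ := by rw [h1e, hG'succ, hG0]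
      have hmono' : StrictMono G' := by
        rw [Fin.strictMono_iff_lt_succ]
        intro i
        induction i using Fin.cases with
        | zero =>
          rw [Fin.castSucc_zero, hG'0, ← h1e, hG'1]
          exact hXF₁
        | succ j =>
          rw [← Fin.succ_castSucc, hG'succ, hG'succ]
          exact hmono (Fin.castSucc_lt_succ (i := j))
      -- F₁ < G (succ 0)
      have hF₁G1 : F₁ < G (Fin.succ 0) := by
        have := hmono (Fin.castSucc_lt_succ (i := (0 : Fin (m + 1))))
        rwa [Fin.castSucc_zero, hG0] at this
      have hXG1 : X < G (Fin.succ 0) := hXF₁.trans hF₁G1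
      -- key slope inequality : μ(F₁, G (succ 0)) < μ(X, F₁)
      have hkey : h.mu F₁ (G (Fin.succ 0)) < h.mu X F₁ := by
        by_contra hcon
        push_neg at hcon
        have h1 : h.mu X F₁ ≤ h.mu X (G (Fin.succ 0)) := h.mu_glue hXF₁ hF₁G1 hcon
        have h2 : h.mu X (G (Fin.succ 0)) ≤ h.mu X F₁ := hmax _ hXG1
        have h3 : h.mu X (G (Fin.succ 0)) = h.mu X F₁ := le_antisymm h2 h1
        have h4 : h.rks (G (Fin.succ 0)) ≤ h.rks F₁ := hmaxR _ hXG1 h3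
        have h5 := h.rks_lt hF₁G1
        omega
      refine ⟨m + 1, G', hmono', hG'0, ?_, ?_, ?_, ?_, ?_⟩
      · rw [← Fin.succ_last, hG'succ, hGlast]
      · intro i
        induction i using Fin.cases with
        | zero =>
          refine h.semistable_sq_congr ?_ ?_ _ hXF₁.le
            (h.semistable_subQuotient hXF₁ (fun W hW _ => hmax W hW))
          · rw [Fin.castSucc_zero, hG'0]
          · rw [Fin.succ_zero_eq_one, hG'1]
        | succ j =>
          refine h.semistable_sq_congr ?_ ?_ _ (hmono (Fin.castSucc_lt_succ (i := j))).le (hss j)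
          · rw [← Fin.succ_castSucc, hG'succ]
          · rw [hG'succ]
      · rw [Fin.strictAnti_iff_succ_lt]
        intro i
        induction i using Fin.cases with
        | zero =>
          refine lt_of_le_of_lt (le_of_eq (h.slope_sq_congr _ hF₁G1 ?_ ?_))
            (lt_of_lt_of_le hkey (le_of_eq (h.slope_sq_congr _ hXF₁ ?_ ?_).symm))
          · rw [← Fin.succ_castSucc, Fin.castSucc_zero, hG'succ, hG0]
          · rw [hG'succ]
          · rw [Fin.castSucc_zero, Fin.castSucc_zero, hG'0]
          · rw [Fin.castSucc_zero, Fin.succ_zero_eq_one, hG'1]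
        | succ j =>
          refine lt_of_le_of_lt (le_of_eq (h.slope_sq_eq _
              (hmono (Fin.castSucc_lt_succ (i := j.succ))).le ?_ ?_))
            (lt_of_lt_of_le (hanti (Fin.castSucc_lt_succ (i := j)))
              (le_of_eq (h.slope_sq_eq _
                (hmono (Fin.castSucc_lt_succ (i := j.castSucc))).le ?_ ?_).symm))
          · rw [← Fin.succ_castSucc, hG'succ]
          · rw [hG'succ]
          · rw [← Fin.succ_castSucc, ← Fin.succ_castSucc, hG'succ]
          · rw [← Fin.succ_castSucc, hG'succ]
      · intro W hW
        rw [hG'1]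
        exact hmax W hW
      · intro W hW heq
        rw [hG'1] at heq ⊢
        exact hmaxR W hW heq

/-- Proposition 1.3.9 (existence): every nonzero object `E` admits a Harder–Narasimhan
filtration, i.e. a strictly increasing chain of subobjects `0 = F₀ < F₁ < ⋯ < Fₙ = E`
with semi-stable successive quotients of strictly decreasing slopes. -/
theorem HNSetting.exists_harderNarasimhanFiltration
    {C : Type u} {A : Type u'} [Category.{v} C] [Category.{v'} A]
    [Abelian C] [Abelian A] (h : HNSetting C A)
    (E : C) (hE : ¬ IsZero E) :
    ∃ (n : ℕ) (F : Fin (n + 1) → Subobject E) (hmono : StrictMono F),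
      F 0 = ⊥ ∧ F (Fin.last n) = ⊤ ∧
      (∀ i : Fin n, h.Semistable
        (subQuotient (F i.castSucc) (F i.succ) (hmono (Fin.castSucc_lt_succ : i.castSucc < i.succ)).le)) ∧
      StrictAnti (fun i : Fin n =>
        h.slope (subQuotient (F i.castSucc) (F i.succ)
          (hmono (Fin.castSucc_lt_succ : i.castSucc < i.succ)).le)) := by
  have hbt : (⊥ : Subobject E) < ⊤ := by
    refine lt_of_le_of_ne le_top ?_
    intro hbot
    apply hE
    have hzb : IsZero (((⊥ : Subobject E) : C)) :=
      (isZero_zero C).of_iso (Subobject.botCoeIsoZero (B := E))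
    rw [hbot] at hzb
    exact hzb.of_iso (asIso (⊤ : Subobject E).arrow).symm
  obtain ⟨m, G, hmono, hG0, hGlast, hss, hanti, -, -⟩ :=
    h.main_induction E (h.rks (⊤ : Subobject E)) ⊥ hbt (Nat.le_add_left _ _)
  exact ⟨m + 1, G, hmono, hG0, hGlast, hss, hanti⟩
end

section
/- The Harder–Narasimhan filtration of a nonzero object E of C is unique: if 0 = F₀ < F₁ < ⋯ < Fₙ = E and 0 = F'₀ < F'₁ < ⋯ < F'ₘ = E are two strictly increasing chains of subobjects of E such that all successive quotients Fᵢ/Fᵢ₋₁ and F'ⱼ/F'ⱼ₋₁ are semi-stable and in each chain the slopes of the successive quotients are strictly decreasing, then n = m and Fᵢ = F'ᵢ as subobjects of E for every i. -/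
open CategoryTheory CategoryTheory.Limits

universe v u v' u'

namespace HNSetting

universe w₁ w₂ w₃ w₄

variable {C : Type u} {A : Type u'} [Category.{v} C] [Category.{v'} A]
  [Abelian C] [Abelian A]

section aux
variable {D : Type*} [Category D] [Abelian D]

lemma isZero_cokernel_of_epi' {X Y : D} (f : X ⟶ Y) [Epi f] : IsZero (cokernel f) := by
  rw [IsZero.iff_id_eq_zero, ← cancel_epi (cokernel.π f)]
  simp [zero_of_epi_comp f (cokernel.condition f)]

lemma shortExact_of_mono' {X Y : D} (f : X ⟶ Y) [Mono f] :
    (ShortComplex.mk f (cokernel.π f) (cokernel.condition f)).ShortExact where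
  exact := ShortComplex.exact_of_g_is_cokernel _ (cokernelIsCokernel f)
  mono_f := by dsimp; infer_instance
  epi_g := by dsimp; infer_instance

lemma shortExact_of_epi' {X Y : D} (g : X ⟶ Y) [Epi g] :
    (ShortComplex.mk (kernel.ι g) g (kernel.condition g)).ShortExact where
  exact := ShortComplex.exact_of_f_is_kernel _ (kernelIsKernel g)
  mono_f := by dsimp; infer_instance
  epi_g := by dsimp; infer_instance

lemma isZero_shortExact {X : D} (hX : IsZero X) :
    (ShortComplex.mk (𝟙 X) (𝟙 X) (hX.eq_of_src _ _)).ShortExact where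
  exact := ShortComplex.exact_of_isZero_X₂ _ hX
  mono_f := by dsimp; infer_instance
  epi_g := by dsimp; infer_instance

end aux

variable (h : HNSetting C A)

lemma r_zero {X : A} (hX : IsZero X) : h.r X = 0 := by
  have h1 := h.r_additive _ (isZero_shortExact hX)
  dsimp at h1
  omega

lemma d_zero {X : C} (hX : IsZero X) : h.d X = 0 := by
  have h1 := h.d_additive _ (isZero_shortExact hX)
  dsimp at h1
  omega

/-- rank in C -/
def R (E : C) : ℕ := h.r (h.η.obj E)

lemma R_pos {E : C} (hE : ¬ IsZero E) : 0 < h.R E :=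
  Nat.pos_of_ne_zero (fun hz => hE ((h.hn1 E).mp hz))

lemma slope_def (E : C) : h.slope E = (h.d E : ℚ) / (h.R E : ℚ) := rfl

lemma r_congr {X Y : A} (e : X ≅ Y) : h.r X = h.r Y := by
  have h1 := h.r_additive _ (shortExact_of_mono' e.hom)
  have h2 := h.r_zero (isZero_cokernel_of_epi' e.hom)
  dsimp at h1
  omega

lemma d_congr {X Y : C} (e : X ≅ Y) : h.d X = h.d Y := by
  have h1 := h.d_additive _ (shortExact_of_mono' e.hom)
  have h2 := h.d_zero (isZero_cokernel_of_epi' e.hom)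
  dsimp at h1
  omega

lemma R_congr {X Y : C} (e : X ≅ Y) : h.R X = h.R Y := h.r_congr (h.η.mapIso e)

lemma slope_congr {X Y : C} (e : X ≅ Y) : h.slope X = h.slope Y := by
  rw [slope_def, slope_def, h.d_congr e, h.R_congr e]

lemma d_R_add {X Y : C} (f : X ⟶ Y) [Mono f] :
    h.d Y = h.d X + h.d (cokernel f) ∧ h.R Y = h.R X + h.R (cokernel f) := by
  haveI := h.η_additive
  haveI := h.η_preservesFiniteLimits
  haveI := h.η_preservesFiniteColimits
  exact ⟨h.d_additive _ (shortExact_of_mono' f),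
    h.r_additive _ (((shortExact_of_mono' f)).map_of_exact h.η)⟩

lemma d_R_add_epi {X Y : C} (g : X ⟶ Y) [Epi g] :
    h.d X = h.d (kernel g) + h.d Y ∧ h.R X = h.R (kernel g) + h.R Y := by
  haveI := h.η_additive
  haveI := h.η_preservesFiniteLimits
  haveI := h.η_preservesFiniteColimits
  exact ⟨h.d_additive _ (shortExact_of_epi' g),
    h.r_additive _ (((shortExact_of_epi' g)).map_of_exact h.η)⟩


lemma mediant1 {a c b d : ℚ} (hb : 0 < b) (hd : 0 < d) :
    (a/b ≤ c/d ↔ a/b ≤ (a+c)/(b+d)) ∧ (a/b ≤ c/d ↔ (a+c)/(b+d) ≤ c/d) := by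
  constructor <;> rw [div_le_div_iff₀ hb hd, div_le_div_iff₀ (by linarith) (by linarith)] <;>
    constructor <;> intro <;> nlinarith

lemma slope_le_of_epi {X I : C} (hX : h.Semistable X) (p : X ⟶ I) [Epi p]
    (hI : ¬ IsZero I) : h.slope X ≤ h.slope I := by
  by_cases hK : IsZero (kernel p)
  · haveI : Mono p := Abelian.mono_of_kernel_ι_eq_zero p (hK.eq_of_src _ _)
    haveI : IsIso p := isIso_of_mono_of_epi p
    exact (h.slope_congr (asIso p)).le
  · -- the kernel is a nonzero subobject of X
    have hmk : ¬ IsZero ((Subobject.mk (kernel.ι p) : C)) :=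
      fun hz => hK (hz.of_iso (Subobject.underlyingIso (kernel.ι p)).symm)
    have hKle : h.slope (kernel p) ≤ h.slope X := by
      rw [← h.slope_congr (Subobject.underlyingIso (kernel.ι p))]
      exact hX.2 _ hmk
    obtain ⟨hd1, hr1⟩ := h.d_R_add_epi p
    have hbK : (0 : ℚ) < h.R (kernel p) := by exact_mod_cast h.R_pos hK
    have hbI : (0 : ℚ) < h.R I := by exact_mod_cast h.R_pos hI
    have ha : (h.d X : ℚ) = (h.d (kernel p) : ℚ) + (h.d I : ℚ) := by
      rw [hd1]; push_cast; ring
    have hb : (h.R X : ℚ) = (h.R (kernel p) : ℚ) + (h.R I : ℚ) := by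
      rw [hr1]; push_cast; ring
    have hKle2 : (h.d (kernel p):ℚ) / (h.R (kernel p):ℚ) ≤ (h.d X:ℚ)/(h.R X:ℚ) := hKle
    show (h.d X:ℚ)/(h.R X:ℚ) ≤ (h.d I:ℚ)/(h.R I:ℚ)
    rw [ha, hb] at hKle2 ⊢
    exact ((mediant1 hbK hbI).2).mp (((mediant1 hbK hbI).1).mpr hKle2)

lemma slope_le_of_mono {I Y : C} (hY : h.Semistable Y) (ι : I ⟶ Y) [Mono ι]
    (hI : ¬ IsZero I) : h.slope I ≤ h.slope Y := by
  have hmk : ¬ IsZero ((Subobject.mk ι : C)) :=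
    fun hz => hI (hz.of_iso (Subobject.underlyingIso ι).symm)
  rw [h.slope_congr (Subobject.underlyingIso ι).symm]
  exact hY.2 _ hmk

lemma slope_le_of_hom_ne_zero {X Y : C} (hX : h.Semistable X) (hY : h.Semistable Y)
    (f : X ⟶ Y) (hf : f ≠ 0) : h.slope X ≤ h.slope Y := by
  have hI : ¬ IsZero (image f) := by
    intro hz
    apply hf
    rw [← image.fac f, hz.eq_of_tgt (factorThruImage f) 0, zero_comp]
  exact (h.slope_le_of_epi hX (factorThruImage f) hI).trans
    (h.slope_le_of_mono hY (image.ι f) hI)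

end HNSetting

lemma subQuotient_congr_s4 {C : Type u} [Category.{v} C] [Abelian C] {E : C}
    {X X' Y Y' : Subobject E} (hX : X = X') (hY : Y = Y') (hle : X ≤ Y) :
    subQuotient X Y hle = subQuotient X' Y' (hX ▸ hY ▸ hle) := by
  subst hX; subst hY; rfl

lemma exists_hom_ne_zero {C : Type u} [Category.{v} C] [Abelian C] {E : C}
    {P Q S T : Subobject E} (hPS : P ≤ S) (hQT : Q ≤ T)
    (hPQ : P ≤ Q) (hST : S ≤ T) (hnSQ : ¬ S ≤ Q) :
    ∃ f : subQuotient P S hPS ⟶ subQuotient Q T hQT, f ≠ 0 := by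
  have w : Subobject.ofLE P S hPS ≫ Subobject.ofLE S T hST =
      Subobject.ofLE P Q hPQ ≫ Subobject.ofLE Q T hQT := by
    rw [Subobject.ofLE_comp_ofLE, Subobject.ofLE_comp_ofLE]
  refine ⟨cokernel.map _ _ (Subobject.ofLE P Q hPQ) (Subobject.ofLE S T hST) w, ?_⟩
  intro hf
  have hzero : Subobject.ofLE S T hST ≫ cokernel.π (Subobject.ofLE Q T hQT) = 0 := by
    have : cokernel.π (Subobject.ofLE P S hPS) ≫
        cokernel.map _ _ (Subobject.ofLE P Q hPQ) (Subobject.ofLE S T hST) w =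
        Subobject.ofLE S T hST ≫ cokernel.π (Subobject.ofLE Q T hQT) := by
      simp [cokernel.map]
    rw [← this, hf]; exact comp_zero
  obtain ⟨l, hl⟩ := (HNSetting.shortExact_of_mono'
    (Subobject.ofLE Q T hQT)).exact.lift' (Subobject.ofLE S T hST) hzero
  exact hnSQ (Subobject.le_of_comm l (by
    rw [← Subobject.ofLE_arrow (h := hQT), ← Category.assoc, hl, Subobject.ofLE_arrow]))

lemma HNSetting.aux1 {C : Type u} {A : Type u'} [Category.{v} C] [Category.{v'} A]
    [Abelian C] [Abelian A] (h : HNSetting C A) {E : C} {m : ℕ}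
    (G : Fin (m + 1) → Subobject E) (hGmono : StrictMono G) (hGtop : G (Fin.last m) = ⊤)
    (hGsemi : ∀ j : Fin m, h.Semistable
      (subQuotient (G j.castSucc) (G j.succ) (hGmono (Fin.castSucc_lt_succ : j.castSucc < j.succ)).le))
    (hGanti : StrictAnti (fun j : Fin m =>
      h.slope (subQuotient (G j.castSucc) (G j.succ) (hGmono (Fin.castSucc_lt_succ : j.castSucc < j.succ)).le)))
    (i : ℕ) (hi : i < m) (S : Subobject E) (hPS : G ⟨i, Nat.lt_succ_of_lt hi⟩ ≤ S)
    (hsemi : h.Semistable (subQuotient _ S hPS))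
    (hnS : ¬ S ≤ G ⟨i, Nat.lt_succ_of_lt hi⟩) :
    h.slope (subQuotient _ S hPS) ≤
      h.slope (subQuotient (G (Fin.castSucc ⟨i, hi⟩)) (G (Fin.succ ⟨i, hi⟩))
        (hGmono (Fin.castSucc_lt_succ)).le) ∧
    (h.slope (subQuotient _ S hPS) =
      h.slope (subQuotient (G (Fin.castSucc ⟨i, hi⟩)) (G (Fin.succ ⟨i, hi⟩))
        (hGmono (Fin.castSucc_lt_succ)).le) →
      S ≤ G ⟨i + 1, Nat.succ_lt_succ hi⟩) := by
  classical
  have hpm : ∃ hk : m < m + 1, S ≤ G ⟨m, hk⟩ := ⟨Nat.lt_succ_self m, by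
    have hG : G ⟨m, Nat.lt_succ_self m⟩ = ⊤ := by rw [← hGtop]; rfl
    rw [hG]; exact le_top⟩
  have hex : ∃ k, ∃ hk : k < m + 1, S ≤ G ⟨k, hk⟩ := ⟨m, hpm⟩
  set k := Nat.find hex with hkdef
  obtain ⟨hk, hSk⟩ : ∃ hk : k < m + 1, S ≤ G ⟨k, hk⟩ := Nat.find_spec hex
  have hkm : k ≤ m := Nat.find_min' hex hpm
  have hik : i < k := by
    by_contra hle
    push_neg at hle
    exact hnS (hSk.trans (hGmono.monotone (Fin.mk_le_mk.mpr hle)))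
  have hk1m : k - 1 < m := by omega
  have hnotk1 : ¬ ∃ hk' : k - 1 < m + 1, S ≤ G ⟨k - 1, hk'⟩ :=
    Nat.find_min hex (by omega)
  have hnSQ : ¬ S ≤ G ⟨k - 1, by omega⟩ := fun hle => hnotk1 ⟨by omega, hle⟩
  have hPQ : G ⟨i, Nat.lt_succ_of_lt hi⟩ ≤ G ⟨k - 1, by omega⟩ :=
    hGmono.monotone (Fin.mk_le_mk.mpr (by omega))
  have hQT : G ⟨k - 1, by omega⟩ ≤ G ⟨k, hk⟩ :=
    hGmono.monotone (Fin.mk_le_mk.mpr (by omega))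
  obtain ⟨f, hf⟩ := exists_hom_ne_zero hPS hQT hPQ hSk hnSQ
  have hcs : Fin.castSucc (⟨k - 1, hk1m⟩ : Fin m) = (⟨k - 1, by omega⟩ : Fin (m + 1)) := rfl
  have hsc : Fin.succ (⟨k - 1, hk1m⟩ : Fin m) = (⟨k, hk⟩ : Fin (m + 1)) := by
    ext; simp [Fin.val_succ]; omega
  have hobj : subQuotient (G (Fin.castSucc ⟨k - 1, hk1m⟩)) (G (Fin.succ ⟨k - 1, hk1m⟩))
      (hGmono (Fin.castSucc_lt_succ)).le
      = subQuotient (G ⟨k - 1, by omega⟩) (G ⟨k, hk⟩) hQT := by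
    rw [subQuotient_congr_s4 (congrArg G hcs) (congrArg G hsc)]
  have hsemiQ : h.Semistable (subQuotient (G ⟨k - 1, by omega⟩) (G ⟨k, hk⟩) hQT) := by
    rw [← hobj]; exact hGsemi ⟨k - 1, hk1m⟩
  have h1 : h.slope (subQuotient _ S hPS)
      ≤ h.slope (subQuotient (G ⟨k - 1, by omega⟩) (G ⟨k, hk⟩) hQT) :=
    h.slope_le_of_hom_ne_zero hsemi hsemiQ f hf
  have h2 : h.slope (subQuotient (G ⟨k - 1, by omega⟩) (G ⟨k, hk⟩) hQT)
      ≤ h.slope (subQuotient (G (Fin.castSucc ⟨i, hi⟩)) (G (Fin.succ ⟨i, hi⟩))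
        (hGmono (Fin.castSucc_lt_succ)).le) := by
    rw [← hobj]
    exact hGanti.antitone (show (⟨i, hi⟩ : Fin m) ≤ ⟨k - 1, hk1m⟩ from
      Fin.mk_le_mk.mpr (by omega))
  refine ⟨h1.trans h2, fun heq => ?_⟩
  have e1 : h.slope (subQuotient (G (Fin.castSucc ⟨k - 1, hk1m⟩)) (G (Fin.succ ⟨k - 1, hk1m⟩))
        (hGmono (Fin.castSucc_lt_succ)).le)
      = h.slope (subQuotient (G (Fin.castSucc ⟨i, hi⟩)) (G (Fin.succ ⟨i, hi⟩))
        (hGmono (Fin.castSucc_lt_succ)).le) := by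
    apply le_antisymm
    · rw [hobj]; exact h2
    · rw [hobj]; exact heq ▸ h1
  have hji : (⟨k - 1, hk1m⟩ : Fin m) = ⟨i, hi⟩ := hGanti.injective e1
  have hki : k = i + 1 := by
    have := Fin.mk.injEq (k - 1) hk1m i hi ▸ hji
    have hv : k - 1 = i := by
      simpa using congrArg Fin.val hji
    omega
  have hGk : (⟨k, hk⟩ : Fin (m + 1)) = ⟨i + 1, Nat.succ_lt_succ hi⟩ := Fin.ext hki
  rw [hGk] at hSk
  exact hSk


/-- Proposition 1.3.9 (uniqueness): the Harder–Narasimhan filtration of a nonzero object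
is unique: two strictly increasing chains of subobjects from `0` to `E` with semi-stable
successive quotients of strictly decreasing slopes have the same length and the same
terms. -/
theorem HNSetting.harderNarasimhanFiltration_unique
    {C : Type u} {A : Type u'} [Category.{v} C] [Category.{v'} A]
    [Abelian C] [Abelian A] (h : HNSetting C A)
    (E : C) (hE : ¬ IsZero E)
    (n m : ℕ) (F : Fin (n + 1) → Subobject E) (G : Fin (m + 1) → Subobject E)
    (hFmono : StrictMono F) (hGmono : StrictMono G)
    (hFbot : F 0 = ⊥) (hFtop : F (Fin.last n) = ⊤)
    (hGbot : G 0 = ⊥) (hGtop : G (Fin.last m) = ⊤)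
    (hFsemi : ∀ i : Fin n, h.Semistable
      (subQuotient (F i.castSucc) (F i.succ) (hFmono (Fin.castSucc_lt_succ : i.castSucc < i.succ)).le))
    (hGsemi : ∀ j : Fin m, h.Semistable
      (subQuotient (G j.castSucc) (G j.succ) (hGmono (Fin.castSucc_lt_succ : j.castSucc < j.succ)).le))
    (hFanti : StrictAnti (fun i : Fin n =>
      h.slope (subQuotient (F i.castSucc) (F i.succ)
        (hFmono (Fin.castSucc_lt_succ : i.castSucc < i.succ)).le)))
    (hGanti : StrictAnti (fun j : Fin m =>
      h.slope (subQuotient (G j.castSucc) (G j.succ)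
        (hGmono (Fin.castSucc_lt_succ : j.castSucc < j.succ)).le))) :
    n = m ∧ ∀ (i : ℕ) (hi : i < n + 1) (hi' : i < m + 1), F ⟨i, hi⟩ = G ⟨i, hi'⟩ := by
  have key : ∀ (i : ℕ) (hi : i < n + 1) (hi' : i < m + 1), F ⟨i, hi⟩ = G ⟨i, hi'⟩ := by
    intro i
    induction i with
    | zero =>
      intro hi hi'
      have e1 : (⟨0, hi⟩ : Fin (n + 1)) = 0 := Fin.ext (by simp)
      have e2 : (⟨0, hi'⟩ : Fin (m + 1)) = 0 := Fin.ext (by simp)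
      rw [e1, e2, hFbot, hGbot]
    | succ i ih =>
      intro hi1 hi1'
      have hi : i < n + 1 := by omega
      have hi' : i < m + 1 := by omega
      have hin : i < n := by omega
      have him : i < m := by omega
      have hFG : F ⟨i, hi⟩ = G ⟨i, hi'⟩ := ih hi hi'
      have hltF : (⟨i, hi⟩ : Fin (n + 1)) < ⟨i + 1, hi1⟩ := Fin.mk_lt_mk.mpr (by omega)
      have hltG : (⟨i, hi'⟩ : Fin (m + 1)) < ⟨i + 1, hi1'⟩ := Fin.mk_lt_mk.mpr (by omega)
      -- direction 1 : F⟨i+1⟩ against chain G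
      have hPSF : G ⟨i, Nat.lt_succ_of_lt him⟩ ≤ F ⟨i + 1, hi1⟩ := hFG ▸ (hFmono hltF).le
      have hobjF : subQuotient (F (Fin.castSucc ⟨i, hin⟩)) (F (Fin.succ ⟨i, hin⟩))
          (hFmono (Fin.castSucc_lt_succ)).le
          = subQuotient (G ⟨i, Nat.lt_succ_of_lt him⟩) (F ⟨i + 1, hi1⟩) hPSF :=
        subQuotient_congr_s4 hFG rfl _
      have hsemiF : h.Semistable
          (subQuotient (G ⟨i, Nat.lt_succ_of_lt him⟩) (F ⟨i + 1, hi1⟩) hPSF) :=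
        hobjF ▸ hFsemi ⟨i, hin⟩
      have hnSF : ¬ F ⟨i + 1, hi1⟩ ≤ G ⟨i, Nat.lt_succ_of_lt him⟩ := by
        rw [← hFG]
        exact (hFmono hltF).not_ge
      have A1 := h.aux1 G hGmono hGtop hGsemi hGanti i him (F ⟨i + 1, hi1⟩) hPSF hsemiF hnSF
      -- direction 2 : G⟨i+1⟩ against chain F
      have hPSG : F ⟨i, Nat.lt_succ_of_lt hin⟩ ≤ G ⟨i + 1, hi1'⟩ := hFG ▸ (hGmono hltG).le
      have hobjG : subQuotient (G (Fin.castSucc ⟨i, him⟩)) (G (Fin.succ ⟨i, him⟩))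
          (hGmono (Fin.castSucc_lt_succ)).le
          = subQuotient (F ⟨i, Nat.lt_succ_of_lt hin⟩) (G ⟨i + 1, hi1'⟩) hPSG :=
        subQuotient_congr_s4 hFG.symm rfl _
      have hsemiG : h.Semistable
          (subQuotient (F ⟨i, Nat.lt_succ_of_lt hin⟩) (G ⟨i + 1, hi1'⟩) hPSG) :=
        hobjG ▸ hGsemi ⟨i, him⟩
      have hnSG : ¬ G ⟨i + 1, hi1'⟩ ≤ F ⟨i, Nat.lt_succ_of_lt hin⟩ := by
        rw [hFG]
        exact (hGmono hltG).not_ge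
      have A2 := h.aux1 F hFmono hFtop hFsemi hFanti i hin (G ⟨i + 1, hi1'⟩) hPSG hsemiG hnSG
      -- combine slopes
      have sF := congrArg h.slope hobjF
      have sG := congrArg h.slope hobjG
      have m1 : h.slope (subQuotient (F (Fin.castSucc ⟨i, hin⟩)) (F (Fin.succ ⟨i, hin⟩))
          (hFmono (Fin.castSucc_lt_succ)).le)
          ≤ h.slope (subQuotient (G (Fin.castSucc ⟨i, him⟩)) (G (Fin.succ ⟨i, him⟩))
          (hGmono (Fin.castSucc_lt_succ)).le) := by
        rw [sF]; exact A1.1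
      have m2 : h.slope (subQuotient (G (Fin.castSucc ⟨i, him⟩)) (G (Fin.succ ⟨i, him⟩))
          (hGmono (Fin.castSucc_lt_succ)).le)
          ≤ h.slope (subQuotient (F (Fin.castSucc ⟨i, hin⟩)) (F (Fin.succ ⟨i, hin⟩))
          (hFmono (Fin.castSucc_lt_succ)).le) := by
        rw [sG]; exact A2.1
      have meq := le_antisymm m1 m2
      have le1 : F ⟨i + 1, hi1⟩ ≤ G ⟨i + 1, Nat.succ_lt_succ him⟩ :=
        A1.2 (by rw [← sF]; exact meq)
      have le2 : G ⟨i + 1, hi1'⟩ ≤ F ⟨i + 1, Nat.succ_lt_succ hin⟩ :=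
        A2.2 (by rw [← sG]; exact meq.symm)
      exact le_antisymm le1 le2
  refine ⟨?_, key⟩
  by_contra hnm
  rcases Nat.lt_or_ge n m with hlt | hge
  · have hk := key n (Nat.lt_succ_self n) (by omega)
    have hFn : F ⟨n, Nat.lt_succ_self n⟩ = ⊤ := by rw [← hFtop]; rfl
    have hGn : G ⟨n, by omega⟩ = ⊤ := by rw [← hk, hFn]
    have hGm : G ⟨m, Nat.lt_succ_self m⟩ = ⊤ := by rw [← hGtop]; rfl
    have hlt' := hGmono (show (⟨n, by omega⟩ : Fin (m + 1)) < ⟨m, Nat.lt_succ_self m⟩ from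
      Fin.mk_lt_mk.mpr hlt)
    rw [hGn, hGm] at hlt'
    exact lt_irrefl _ hlt'
  · have hmn : m < n := by omega
    have hk := key m (by omega) (Nat.lt_succ_self m)
    have hGm : G ⟨m, Nat.lt_succ_self m⟩ = ⊤ := by rw [← hGtop]; rfl
    have hFm : F ⟨m, by omega⟩ = ⊤ := by rw [hk, hGm]
    have hFn : F ⟨n, Nat.lt_succ_self n⟩ = ⊤ := by rw [← hFtop]; rfl
    have hlt' := hFmono (show (⟨m, by omega⟩ : Fin (n + 1)) < ⟨n, Nat.lt_succ_self n⟩ from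
      Fin.mk_lt_mk.mpr hmn)
    rw [hFm, hFn] at hlt'
    exact lt_irrefl _ hlt'
end
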